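/- Let X and Y be quasi-categories and F : X ⟶ Y a map of simplicial sets satisfying: (i) the induced functor ho(F) : ho(X) ⥤ ho(Y) between homotopy categories is an isofibration and is full; (ii) the naturality square formed by F, N(ho(F)), and the unit maps X ⟶ N(ho(X)) and Y ⟶ N(ho(Y)) of the adjunction ho ⊣ N is a pullback square of simplicial sets (condition (ii) expresses that F is fully faithful). Then F is an inner fibration, i.e. F has the right lifting property with respect to every inner horn inclusion Λ[n, i] ⟶ Δ[n] with 0 < i < n; together with (i), F is a fibration of quasi-categories. -/

import Mathlib

open CategoryTheory SSet Simplicial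

lemma aux_hom_ext_strictSegal {X : SSet.{0}} [SSet.IsStrictSegal X] {n : ℕ}
    (a b : Δ[n] ⟶ X)
    (hv : ∀ k : Fin (n + 1), a.app _ ((SSet.stdSimplex.spineId n).vertex k) =
      b.app _ ((SSet.stdSimplex.spineId n).vertex k))
    (h : ∀ k : Fin n, a.app _ ((SSet.stdSimplex.spineId n).arrow k) =
      b.app _ ((SSet.stdSimplex.spineId n).arrow k)) : a = b := by
  apply (SSet.yonedaEquiv (X := X) (n := ⦋n⦌)).injective
  apply (SSet.StrictSegal.ofIsStrictSegal X).spineInjective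
  have ha : SSet.yonedaEquiv a = a.app _ (SSet.stdSimplex.objEquiv.symm (𝟙 _)) := rfl
  have hb : SSet.yonedaEquiv b = b.app _ (SSet.stdSimplex.objEquiv.symm (𝟙 _)) := rfl
  ext k
  · dsimp only [SSet.StrictSegal.spineEquiv, Equiv.coe_fn_mk, SSet.spine_vertex]
    rw [ha, hb, ← FunctorToTypes.naturality, ← FunctorToTypes.naturality]
    exact hv k
  · dsimp only [SSet.StrictSegal.spineEquiv, Equiv.coe_fn_mk, SSet.spine_arrow]
    rw [ha, hb, ← FunctorToTypes.naturality, ← FunctorToTypes.naturality]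
    exact h k

lemma aux_nerve_innerFib {C D : Cat.{0,0}} (G : C ⟶ D) {n : ℕ} {i : Fin (n + 3)}
    (h₀ : 0 < i) (hₙ : i < Fin.last (n + 2)) :
    HasLiftingProperty ((SSet.horn (n + 2) i).ι) (nerveFunctor.map G) := by
  constructor
  intro f g sq
  have : SSet.Quasicategory (nerveFunctor.obj C) :=
    inferInstanceAs (SSet.Quasicategory (nerve C))
  have : SSet.IsStrictSegal (nerveFunctor.obj D) :=
    inferInstanceAs (SSet.IsStrictSegal (nerve D))
  obtain ⟨σ, hσ⟩ := SSet.Quasicategory.hornFilling h₀ hₙ f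
  refine ⟨⟨⟨σ, hσ.symm, ?_⟩⟩⟩
  have key : ∀ (m : SimplexCategoryᵒᵖ) (x : Λ[n + 2, i].obj m),
      (σ ≫ nerveFunctor.map G).app m (((SSet.horn (n+2) i).ι).app m x) =
      g.app m (((SSet.horn (n+2) i).ι).app m x) := by
    intro m x
    have h1 : ((SSet.horn (n+2) i).ι ≫ σ ≫ nerveFunctor.map G).app m x =
        ((SSet.horn (n+2) i).ι ≫ g).app m x := by
      rw [← sq.w, reassoc_of% hσ.symm]
    exact h1
  apply aux_hom_ext_strictSegal
  · intro k
    exact key _ ((SSet.horn.spineId i h₀ hₙ).vertex k)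
  · intro k
    exact key _ ((SSet.horn.spineId i h₀ hₙ).arrow k)

theorem innerFibration_of_isofibration_of_fullyFaithful
    (ho : SSet.{0} ⥤ Cat.{0, 0}) (adj : ho ⊣ nerveFunctor)
    (X Y : SSet.{0}) (hX : SSet.Quasicategory X) (hY : SSet.Quasicategory Y)
    (F : X ⟶ Y)
    (hfull : (ho.map F).toFunctor.Full)
    (hisofib : ∀ (c : ho.obj X) (d : ho.obj Y) (e : (ho.map F).toFunctor.obj c ≅ d),
      ∃ (c' : ho.obj X) (h : (ho.map F).toFunctor.obj c' = d) (eIso : c ≅ c'),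
        (ho.map F).toFunctor.map eIso.hom ≫ eqToHom h = e.hom)
    (hpb : IsPullback (adj.unit.app X) F (nerveFunctor.map (ho.map F)) (adj.unit.app Y)) :
    ∀ (n : ℕ) (i : Fin (n + 1)), 0 < (i : ℕ) → (i : ℕ) < n →
      HasLiftingProperty (SSet.horn n i).ι F := by
  intro n i h0 hn
  obtain ⟨m, rfl⟩ : ∃ m, n = m + 2 := ⟨n - 2, by omega⟩
  have h₀ : (0 : Fin (m + 3)) < i := by
    rwa [Fin.lt_iff_val_lt_val]
  have hₙ : i < Fin.last (m + 2) := by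
    rwa [Fin.lt_iff_val_lt_val]
  have hlp := aux_nerve_innerFib (ho.map F) h₀ hₙ
  constructor
  intro f g sq
  have w2 : (f ≫ adj.unit.app X) ≫ nerveFunctor.map (ho.map F) =
      (SSet.horn (m + 2) i).ι ≫ (g ≫ adj.unit.app Y) := by
    rw [Category.assoc, hpb.w, ← Category.assoc, sq.w, Category.assoc]
  have sq2 : CommSq (f ≫ adj.unit.app X) ((SSet.horn (m + 2) i).ι)
      (nerveFunctor.map (ho.map F)) (g ≫ adj.unit.app Y) := ⟨w2⟩
  obtain ⟨⟨l⟩⟩ := hlp.sq_hasLift sq2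
  refine ⟨⟨⟨hpb.lift l.l g l.fac_right, ?_, ?_⟩⟩⟩
  · apply hpb.hom_ext
    · rw [Category.assoc, hpb.lift_fst, l.fac_left]
    · rw [Category.assoc, hpb.lift_snd, sq.w]
  · exact hpb.lift_snd _ _ _
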